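/- Let γ ∈ ℝ^n satisfy 1 ≤ γ_j ≤ α_j for all j, and set d_γ = Σ_{j=1}^n γ_j. Then for every x ∈ [0,1]^n, ∏_{j=1}^n x_j^{α_j} − max{ 0, 1 + Σ_{j=1}^n γ_j (x_j − 1) } ≤ (1 − 1/d_γ)^{d_γ} ≤ (1 − 1/d)^d. -/

import Mathlib

/-- Bernoulli-type bound: for `1 ≤ D`, `0 ≤ B ≤ A ≤ 1` we have `A^D - B^D ≤ D*(A-B)`. -/
private lemma key_aux15 {A B D : ℝ} (hD : 1 ≤ D) (hB0 : 0 ≤ B) (hBA : B ≤ A) (hA1 : A ≤ 1) :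
    A ^ D - B ^ D ≤ D * (A - B) := by
  rcases eq_or_lt_of_le (hB0.trans hBA) with h | hA0
  · have hB : B = 0 := le_antisymm (hBA.trans h.symm.le) hB0
    rw [← h, hB, Real.zero_rpow (by linarith : D ≠ 0)]
    simp
  · have hAne : A ≠ 0 := ne_of_gt hA0
    have h1 : (-1:ℝ) ≤ B / A - 1 := by
      have : 0 ≤ B / A := div_nonneg hB0 hA0.le
      linarith
    have h2 := one_add_mul_self_le_rpow_one_add h1 hD
    rw [add_sub_cancel] at h2
    have h3 : (B / A) ^ D = B ^ D / A ^ D := Real.div_rpow hB0 hA0.le D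
    have hApos : 0 < A ^ D := Real.rpow_pos_of_pos hA0 D
    have h4 : (1 + D * (B / A - 1)) * A ^ D ≤ B ^ D := by
      rw [h3] at h2
      calc (1 + D * (B / A - 1)) * A ^ D ≤ (B ^ D / A ^ D) * A ^ D :=
            mul_le_mul_of_nonneg_right h2 hApos.le
        _ = B ^ D := div_mul_cancel₀ _ (ne_of_gt hApos)
    have h6 : A ^ D = A ^ (D - 1) * A := by
      rw [← Real.rpow_add_one hAne]
      ring_nf
    have hP0 : 0 ≤ A ^ (D - 1) := Real.rpow_nonneg hA0.le _
    have hP1 : A ^ (D - 1) ≤ 1 := Real.rpow_le_one hA0.le hA1 (by linarith)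
    have hid : (1 + D * (B / A - 1)) * A ^ D = A ^ D + D * (B - A) * A ^ (D - 1) := by
      rw [h6]
      field_simp
    rw [hid] at h4
    have hmul : D * (A - B) * A ^ (D - 1) ≤ D * (A - B) * 1 :=
      mul_le_mul_of_nonneg_left hP1 (mul_nonneg (by linarith) (by linarith))
    nlinarith [h4, hmul]

/-- Monotonicity of `t ↦ (1 - 1/t)^t` for `1 ≤ t`. -/
private lemma mono_aux15 {s t : ℝ} (hs : 1 ≤ s) (hst : s ≤ t) :
    (1 - 1 / s) ^ s ≤ (1 - 1 / t) ^ t := by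
  have ht : (1:ℝ) ≤ t := hs.trans hst
  have hs0 : (0:ℝ) < s := lt_of_lt_of_le one_pos hs
  have ht0 : (0:ℝ) < t := lt_of_lt_of_le one_pos ht
  have hb0 : (0:ℝ) ≤ 1 - 1 / t := by
    have : 1 / t ≤ 1 := by rw [div_le_one ht0]; exact ht
    linarith
  have ha0 : (0:ℝ) ≤ 1 - 1 / s := by
    have : 1 / s ≤ 1 := by rw [div_le_one hs0]; exact hs
    linarith
  have hp : (1:ℝ) ≤ t / s := (one_le_div hs0).2 hst
  have hber := one_add_mul_self_le_rpow_one_add (s := -(1 / t))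
    (by have : 1 / t ≤ 1 := by rw [div_le_one ht0]; exact ht
        linarith) hp
  have h1 : 1 + t / s * -(1 / t) = 1 - 1 / s := by field_simp; ring
  have h2 : 1 + -(1 / t) = 1 - 1 / t := by ring
  rw [h1, h2] at hber
  calc (1 - 1 / s) ^ s ≤ ((1 - 1 / t) ^ (t / s)) ^ s :=
        Real.rpow_le_rpow ha0 hber hs0.le
    _ = (1 - 1 / t) ^ t := by
        rw [← Real.rpow_mul hb0, div_mul_cancel₀ _ (ne_of_gt hs0)]

/-- Degree-dependent error bound for the piecewise-linear convex underestimator. -/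
theorem stmt15 (n : ℕ) (hn : 1 ≤ n) (α : Fin n → ℕ) (hα : ∀ j, 1 ≤ α j)
    (d : ℕ) (hd : d = ∑ j, α j)
    (γ : Fin n → ℝ) (hγ : ∀ j, 1 ≤ γ j ∧ γ j ≤ (α j : ℝ))
    (dγ : ℝ) (hdγ : dγ = ∑ j, γ j) :
    (∀ x ∈ Set.Icc (0 : Fin n → ℝ) 1,
      (∏ j, x j ^ α j) - max 0 (1 + ∑ j, γ j * (x j - 1)) ≤ (1 - 1 / dγ) ^ dγ) ∧
    (1 - 1 / dγ) ^ dγ ≤ (1 - 1 / (d : ℝ)) ^ d := by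
  have hD1 : (1:ℝ) ≤ dγ := by
    calc (1:ℝ) ≤ (n:ℝ) := by exact_mod_cast hn
      _ = ∑ _j : Fin n, (1:ℝ) := by simp
      _ ≤ ∑ j, γ j := Finset.sum_le_sum fun j _ => (hγ j).1
      _ = dγ := hdγ.symm
  have hD0 : (0:ℝ) < dγ := lt_of_lt_of_le one_pos hD1
  have hB0 : (0:ℝ) ≤ 1 - 1 / dγ := by
    have : 1 / dγ ≤ 1 := by rw [div_le_one hD0]; exact hD1
    linarith
  constructor
  · rintro x ⟨hx0, hx1⟩
    have h0 : ∀ j, 0 ≤ x j := fun j => hx0 j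
    have h1 : ∀ j, x j ≤ 1 := fun j => hx1 j
    set S : ℝ := ∑ j, γ j * (1 - x j) with hS
    have hsum : ∑ j, γ j * (x j - 1) = -S := by
      rw [hS, ← Finset.sum_neg_distrib]
      exact Finset.sum_congr rfl fun j _ => by ring
    have hS0 : 0 ≤ S := Finset.sum_nonneg fun j _ =>
      mul_nonneg (le_trans zero_le_one (hγ j).1) (by linarith [h1 j])
    have hSD : S ≤ dγ := by
      rw [hS, hdγ]
      exact Finset.sum_le_sum fun j _ => by nlinarith [(hγ j).1, h0 j, h1 j]
    set A : ℝ := 1 - S / dγ with hA_def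
    have hA0 : 0 ≤ A := by
      have : S / dγ ≤ 1 := by rw [div_le_one hD0]; exact hSD
      simp only [hA_def]; linarith
    have hA1 : A ≤ 1 := by
      have : 0 ≤ S / dγ := div_nonneg hS0 hD0.le
      simp only [hA_def]; linarith
    have hgx : ∑ j, γ j * x j = dγ - S := by
      rw [hdγ, hS, ← Finset.sum_sub_distrib]
      exact Finset.sum_congr rfl fun j _ => by ring
    have hprod : (∏ j, x j ^ α j) ≤ A ^ dγ := by
      have step1 : (∏ j, x j ^ α j) ≤ ∏ j, x j ^ γ j := by
        apply Finset.prod_le_prod (fun j _ => pow_nonneg (h0 j) _)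
        intro j _
        rw [← Real.rpow_natCast (x j) (α j)]
        exact Real.rpow_le_rpow_of_exponent_ge' (h0 j) (h1 j)
          (by linarith [(hγ j).1]) (hγ j).2
      have step2 : (∏ j, x j ^ γ j) = (∏ j, x j ^ (γ j / dγ)) ^ dγ := by
        rw [← Real.finset_prod_rpow _ _ (fun j _ => Real.rpow_nonneg (h0 j) _) dγ]
        refine Finset.prod_congr rfl fun j _ => ?_
        rw [← Real.rpow_mul (h0 j), div_mul_cancel₀ _ (ne_of_gt hD0)]
      have step3 : (∏ j, x j ^ (γ j / dγ)) ≤ ∑ j, (γ j / dγ) * x j :=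
        Real.geom_mean_le_arith_mean_weighted _ _ _
          (fun j _ => div_nonneg (by linarith [(hγ j).1]) hD0.le)
          (by rw [← Finset.sum_div, ← hdγ, div_self (ne_of_gt hD0)])
          (fun j _ => h0 j)
      have step4 : ∑ j, (γ j / dγ) * x j = A := by
        have hh : ∑ j, (γ j / dγ) * x j = (∑ j, γ j * x j) / dγ := by
          rw [Finset.sum_div]
          exact Finset.sum_congr rfl fun j _ => by ring
        rw [hh, hgx, hA_def, sub_div, div_self (ne_of_gt hD0)]
      calc (∏ j, x j ^ α j) ≤ ∏ j, x j ^ γ j := step1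
        _ = (∏ j, x j ^ (γ j / dγ)) ^ dγ := step2
        _ ≤ A ^ dγ := by
            rw [← step4]
            exact Real.rpow_le_rpow
              (Finset.prod_nonneg fun j _ => Real.rpow_nonneg (h0 j) _)
              step3 hD0.le
    rw [hsum]
    rcases le_or_gt 1 S with hc | hc
    · have hmax : max (0:ℝ) (1 + -S) = 0 := max_eq_left (by linarith)
      rw [hmax, sub_zero]
      refine hprod.trans (Real.rpow_le_rpow hA0 ?_ hD0.le)
      have hdiv : 1 / dγ ≤ S / dγ := (div_le_div_iff_of_pos_right hD0).2 hc
      simp only [hA_def]; linarith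
    · have hmax : max (0:ℝ) (1 + -S) = 1 - S := max_eq_right (by linarith)
      rw [hmax]
      have hAB : 1 - 1 / dγ ≤ A := by
        have hdiv : S / dγ ≤ 1 / dγ := (div_le_div_iff_of_pos_right hD0).2 hc.le
        simp only [hA_def]; linarith
      have hkey := key_aux15 hD1 hB0 hAB hA1
      have hdiff : dγ * (A - (1 - 1 / dγ)) = 1 - S := by
        simp only [hA_def]
        field_simp
        ring
      linarith [hprod, hkey]
  · have hdd : dγ ≤ (d:ℝ) := by
      rw [hdγ, hd]
      push_cast
      exact Finset.sum_le_sum fun j _ => (hγ j).2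
    have h := mono_aux15 hD1 hdd
    rwa [Real.rpow_natCast] at h
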